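/- Let w₁, w₂ ∈ ℝ^k with ‖w₁‖ = ‖w₂‖ = r > 0, and let L : ℝ^k → ℝ be a linear map with operator norm at most 1 + 2δ. If L(w₁) ≥ r·(1 - (2δ + ε)) and L(w₂) ≥ r·(1 - (2δ + ε)) where 0 ≤ 2δ + ε < 1, then the angle θ between w₁ and w₂ satisfies cos θ ≥ 2·((1 - (2δ + ε))/(1 + 2δ))² - 1. -/

import Mathlib

theorem cos_angle_lower_bound (k : ℕ) (w₁ w₂ : EuclideanSpace ℝ (Fin k)) (r : ℝ)
    (hr : 0 < r) (h₁ : ‖w₁‖ = r) (h₂ : ‖w₂‖ = r)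
    (L : EuclideanSpace ℝ (Fin k) →ₗ[ℝ] ℝ) (δ ε : ℝ) (hδ : 0 < δ) (hε : 0 ≤ ε)
    (hεδ : 2 * δ + ε < 1)
    (hL : ∀ v : EuclideanSpace ℝ (Fin k), |L v| ≤ (1 + 2 * δ) * ‖v‖)
    (hw₁ : L w₁ ≥ r * (1 - (2 * δ + ε))) (hw₂ : L w₂ ≥ r * (1 - (2 * δ + ε))) :
    Real.cos (InnerProductGeometry.angle w₁ w₂) ≥
      2 * ((1 - (2 * δ + ε)) / (1 + 2 * δ)) ^ 2 - 1 := by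
  have hpos : (0:ℝ) < 1 + 2 * δ := by linarith
  have hc0 : (0:ℝ) ≤ 1 - (2 * δ + ε) := by linarith
  set c : ℝ := (1 - (2 * δ + ε)) / (1 + 2 * δ) with hc
  have hc0' : 0 ≤ c := div_nonneg hc0 hpos.le
  -- lower bound on ‖w₁ + w₂‖
  have hsum : L (w₁ + w₂) ≥ 2 * r * (1 - (2 * δ + ε)) := by
    rw [map_add]; linarith
  have hnorm : ‖w₁ + w₂‖ ≥ 2 * r * c := by
    have h1 := hL (w₁ + w₂)
    have h2 : L (w₁ + w₂) ≤ |L (w₁ + w₂)| := le_abs_self _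
    have key : c * (1 + 2 * δ) = 1 - (2 * δ + ε) := div_mul_cancel₀ _ hpos.ne'
    nlinarith
  -- inner product bound
  have hinner : inner ℝ w₁ w₂ ≥ r ^ 2 * (2 * c ^ 2 - 1) := by
    have hsq : ‖w₁ + w₂‖ ^ 2 = ‖w₁‖ ^ 2 + 2 * inner ℝ w₁ w₂ + ‖w₂‖ ^ 2 := by
      rw [@norm_add_sq_real]
    have h2 : (2 * r * c) ^ 2 ≤ ‖w₁ + w₂‖ ^ 2 := by
      apply pow_le_pow_left₀ (by positivity) hnorm 2
    rw [hsq, h₁, h₂] at h2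
    nlinarith
  have hw₁0 : w₁ ≠ 0 := by
    intro h; rw [h, norm_zero] at h₁; linarith
  have hw₂0 : w₂ ≠ 0 := by
    intro h; rw [h, norm_zero] at h₂; linarith
  rw [InnerProductGeometry.cos_angle, h₁, h₂]
  rw [ge_iff_le, le_div_iff₀ (by positivity)]
  nlinarith
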